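/- An n×n real matrix X satisfies condition (α) — there exists α > 0 with X^{(i)} − X^{(j)} a permutation of α(e_1 − e_2) for all distinct i, j — if and only if X = v e^t + λP for some v ∈ R^n, λ ≠ 0, and permutation matrix P. -/

import Mathlib

open Matrix

/-- `P` is a permutation matrix. -/
def IsPermMatrix {n : ℕ} (P : Matrix (Fin n) (Fin n) ℝ) : Prop :=
  ∃ σ : Equiv.Perm (Fin n), P = σ.permMatrix ℝ

/-- Vector majorization: `a = D b` for some doubly stochastic `D`. -/
def VecMaj {n : ℕ} (a b : Fin n → ℝ) : Prop :=
  ∃ D ∈ doublyStochastic ℝ (Fin n), a = D.mulVec b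

/-- Strong majorization of matrices: `A = D B` for some doubly stochastic `D`. -/
def StrongMaj {n m : ℕ} (A B : Matrix (Fin n) (Fin m) ℝ) : Prop :=
  ∃ D ∈ doublyStochastic ℝ (Fin n), A = D * B

/-- `a` is a permutation of `b`. -/
def PermOf {n : ℕ} (a b : Fin n → ℝ) : Prop :=
  ∃ σ : Equiv.Perm (Fin n), ∀ i, a i = b (σ i)

lemma perm_exists_map {n : ℕ} {a b c d : Fin n} (hab : a ≠ b) (hcd : c ≠ d) :
    ∃ σ : Equiv.Perm (Fin n), σ a = c ∧ σ b = d := by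
  refine ⟨(Equiv.swap a c).trans (Equiv.swap ((Equiv.swap a c) b) d), ?_, ?_⟩
  · simp only [Equiv.trans_apply, Equiv.swap_apply_left]
    rw [Equiv.swap_apply_of_ne_of_ne _ hcd]
    intro h
    exact hab ((Equiv.swap a c).injective (by simp [← h]))
  · simp [Equiv.trans_apply, Equiv.swap_apply_left]

lemma permOf_single_iff {n : ℕ} (hn : 2 ≤ n) (α : ℝ) (u : Fin n → ℝ) :
    PermOf u (α • (Pi.single (⟨0, Nat.lt_of_lt_of_le Nat.two_pos hn⟩ : Fin n) 1 - Pi.single ⟨1, Nat.lt_of_lt_of_le Nat.one_lt_two hn⟩ 1)) ↔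
    ∃ a b : Fin n, a ≠ b ∧ u = α • (Pi.single a 1 - Pi.single b 1) := by
  set i0 : Fin n := ⟨0, Nat.lt_of_lt_of_le Nat.two_pos hn⟩
  set i1 : Fin n := ⟨1, Nat.lt_of_lt_of_le Nat.one_lt_two hn⟩
  have h01 : i0 ≠ i1 := by simp [i0, i1, Fin.ext_iff]
  constructor
  · rintro ⟨σ, hσ⟩
    refine ⟨σ.symm i0, σ.symm i1, fun h => h01 (σ.symm.injective h), ?_⟩
    funext k
    rw [hσ k]
    have e0 : σ k = i0 ↔ k = σ.symm i0 := by rw [Equiv.eq_symm_apply]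
    have e1 : σ k = i1 ↔ k = σ.symm i1 := by rw [Equiv.eq_symm_apply]
    simp only [Pi.smul_apply, Pi.sub_apply, Pi.single_apply, smul_eq_mul, e0, e1]
  · rintro ⟨a, b, hab, rfl⟩
    obtain ⟨σ, hσa, hσb⟩ := perm_exists_map hab h01
    refine ⟨σ, fun k => ?_⟩
    have e0 : σ k = i0 ↔ k = a := ⟨fun h => σ.injective (h.trans hσa.symm), fun h => h ▸ hσa⟩
    have e1 : σ k = i1 ↔ k = b := ⟨fun h => σ.injective (h.trans hσb.symm), fun h => h ▸ hσb⟩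
    simp only [Pi.smul_apply, Pi.sub_apply, Pi.single_apply, smul_eq_mul, e0, e1]

lemma pair_lemma {n : ℕ} {α : ℝ} (hα : 0 < α) {a b a' b' c d : Fin n}
    (hab : a ≠ b) (hab' : a' ≠ b') (hcd : c ≠ d)
    (h : ((α • (Pi.single a 1 - Pi.single b 1) : Fin n → ℝ)) - (α • (Pi.single a' 1 - Pi.single b' 1))
         = (α • (Pi.single c 1 - Pi.single d 1) : Fin n → ℝ)) :
    (a = a' ∧ b ≠ b') ∨ (b = b' ∧ a ≠ a') := by
  by_contra hc
  push_neg at hc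
  obtain ⟨h1, h2⟩ := hc
  by_cases haa : a = a'
  · have hbb : b = b' := h1 haa
    subst haa; subst hbb
    have hcc := congrFun h c
    simp only [Pi.sub_apply, Pi.smul_apply, Pi.single_apply, smul_eq_mul,
      eq_self_iff_true, if_true, hcd.symm, if_false, Ne.symm hcd] at hcc
    split_ifs at hcc <;> nlinarith
  · have hbb : b ≠ b' := fun hb => haa (h2 hb)
    have ha := congrFun h a
    simp only [Pi.sub_apply, Pi.smul_apply, Pi.single_apply, smul_eq_mul,
      eq_self_iff_true, if_true, hab, haa, if_false] at ha
    have hac : a = c := by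
      by_contra h4
      rw [if_neg h4] at ha
      split_ifs at ha <;> nlinarith
    have had : a ≠ d := by
      intro h4
      rw [if_pos h4] at ha
      split_ifs at ha <;> nlinarith
    have hb := congrFun h b
    simp only [Pi.sub_apply, Pi.smul_apply, Pi.single_apply, smul_eq_mul,
      eq_self_iff_true, if_true, Ne.symm hab, hbb, if_false] at hb
    have hba' : b ≠ a' := by
      intro h4
      rw [if_pos h4] at hb
      split_ifs at hb <;> nlinarith
    rw [if_neg hba'] at hb
    have hbd : b = d := by
      by_contra h4
      rw [if_neg h4] at hb
      split_ifs at hb <;> nlinarith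
    have ha' := congrFun h a'
    simp only [Pi.sub_apply, Pi.smul_apply, Pi.single_apply, smul_eq_mul,
      eq_self_iff_true, if_true, Ne.symm haa, hab', Ne.symm hba', if_false,
      ← hac, ← hbd, haa] at ha'
    nlinarith [ha']

lemma build_result {n : ℕ} (X : Matrix (Fin n) (Fin n) ℝ) (lam : ℝ) (hlam : lam ≠ 0)
    (v : Fin n → ℝ) (τ : Fin n → Fin n) (hτ : Function.Injective τ)
    (h : ∀ k j, X k j = v k + lam * (if k = τ j then 1 else 0)) :
    ∃ (v : Fin n → ℝ) (lam : ℝ) (Q : Matrix (Fin n) (Fin n) ℝ),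
      lam ≠ 0 ∧ IsPermMatrix Q ∧ X = (Matrix.of fun i _ => v i) + lam • Q := by
  have hbij := Finite.injective_iff_bijective.mp hτ
  set σ := Equiv.ofBijective τ hbij with hσ
  refine ⟨v, lam, (Equiv.Perm.permMatrix ℝ σ.symm), hlam, ⟨σ.symm, rfl⟩, ?_⟩
  ext k j
  have hiff : (σ.symm k = j) ↔ (k = τ j) := by
    rw [Equiv.symm_apply_eq]
    constructor <;> intro hh <;> exact hh
  rw [h k j]
  simp only [Matrix.add_apply, Matrix.of_apply, Matrix.smul_apply,
    Equiv.Perm.permMatrix, PEquiv.toMatrix_apply, Equiv.toPEquiv_apply,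
    Option.mem_some_iff, smul_eq_mul, hiff]

theorem stmt16 {n : ℕ} (hn : 2 ≤ n) (X : Matrix (Fin n) (Fin n) ℝ) :
    (∃ α : ℝ, 0 < α ∧ ∀ i j : Fin n, i ≠ j →
      PermOf (fun k => X k i - X k j)
        (α • (Pi.single (⟨0, by omega⟩ : Fin n) 1 - Pi.single ⟨1, by omega⟩ 1))) ↔
    ∃ (v : Fin n → ℝ) (lam : ℝ) (Q : Matrix (Fin n) (Fin n) ℝ),
      lam ≠ 0 ∧ IsPermMatrix Q ∧ X = (Matrix.of fun i _ => v i) + lam • Q := by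

  constructor
  · rintro ⟨α, hα, H⟩
    set i0 : Fin n := ⟨0, by omega⟩ with hi0
    set i1 : Fin n := ⟨1, by omega⟩ with hi1
    have h01 : i1 ≠ i0 := by simp [i0, i1, Fin.ext_iff]
    have H' : ∀ i j, i ≠ j → ∃ a b : Fin n, a ≠ b ∧
        (fun k => X k i - X k j) = α • (Pi.single a 1 - Pi.single b 1) :=
      fun i j hij => (permOf_single_iff hn α _).mp (H i j hij)
    have H2 : ∀ j, ∃ a b : Fin n, j ≠ i0 →
        (a ≠ b ∧ (fun k => X k j - X k i0) = α • (Pi.single a 1 - Pi.single b 1)) := by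
      intro j
      by_cases hj : j = i0
      · exact ⟨i0, i1, fun h => absurd hj h⟩
      · obtain ⟨a, b, h1, h2⟩ := H' j i0 hj
        exact ⟨a, b, fun _ => ⟨h1, h2⟩⟩
    choose a b hspec using H2
    have hne : ∀ j, j ≠ i0 → a j ≠ b j := fun j hj => (hspec j hj).1
    have hcol : ∀ j, j ≠ i0 →
        (fun k => X k j - X k i0) = α • (Pi.single (a j) 1 - Pi.single (b j) 1) :=
      fun j hj => (hspec j hj).2
    have pair : ∀ i j, i ≠ i0 → j ≠ i0 → i ≠ j →
        (a i = a j ∧ b i ≠ b j) ∨ (b i = b j ∧ a i ≠ a j) := by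
      intro i j hi hj hij
      obtain ⟨c, d, hcd, hX⟩ := H' i j hij
      apply pair_lemma hα (hne i hi) (hne j hj) hcd
      rw [← hcol i hi, ← hcol j hj, ← hX]
      funext k
      simp only [Pi.sub_apply]
      ring
    have dich : (∀ i, i ≠ i0 → ∀ j, j ≠ i0 → a i = a j) ∨
        (∀ i, i ≠ i0 → ∀ j, j ≠ i0 → b i = b j) := by
      by_cases hA : ∀ i, i ≠ i0 → ∀ j, j ≠ i0 → a i = a j
      · exact Or.inl hA
      · right
        push_neg at hA
        obtain ⟨i, hi, j, hj, hij⟩ := hA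
        have hne_ij : i ≠ j := fun h => hij (h ▸ rfl)
        have hbij : b i = b j := by
          rcases pair i j hi hj hne_ij with ⟨h1, _⟩ | ⟨h1, _⟩
          · exact absurd h1 hij
          · exact h1
        have key : ∀ k, k ≠ i0 → b k = b i := by
          intro k hk
          by_cases hki : k = i
          · rw [hki]
          by_cases hkj : k = j
          · rw [hkj, ← hbij]
          rcases pair k i hk hi hki with ⟨h1, _⟩ | ⟨h1, _⟩
          · rcases pair k j hk hj hkj with ⟨h2, _⟩ | ⟨h2, _⟩
            · exact absurd (h1.symm.trans h2) hij
            · rw [h2, ← hbij]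
          · exact h1
        intro p hp q hq
        rw [key p hp, key q hq]
    rcases dich with hA | hB
    · -- case A : all `a` equal
      have haj : ∀ j, j ≠ i0 → a j = a i1 := fun j hj => hA j hj i1 h01
      have hbne : ∀ j, j ≠ i0 → b j ≠ a i1 := by
        intro j hj h
        exact hne j hj (by rw [haj j hj, ← h])
      have hbinj : ∀ i j, i ≠ i0 → j ≠ i0 → i ≠ j → b i ≠ b j := by
        intro i j hi hj hij
        rcases pair i j hi hj hij with ⟨_, h2⟩ | ⟨_, h2⟩
        · exact h2
        · exact absurd ((haj i hi).trans (haj j hj).symm) h2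
      set τ : Fin n → Fin n := fun j => if j = i0 then a i1 else b j with hτdef
      have hτinj : Function.Injective τ := by
        intro p q hpq
        by_cases hp : p = i0 <;> by_cases hq : q = i0
        · rw [hp, hq]
        · simp only [hτdef, if_pos hp, if_neg hq] at hpq
          exact absurd hpq.symm (hbne q hq)
        · simp only [hτdef, if_neg hp, if_pos hq] at hpq
          exact absurd hpq (hbne p hp)
        · by_contra hne'
          simp only [hτdef, if_neg hp, if_neg hq] at hpq
          exact hbinj p q hp hq hne' hpq
      apply build_result X (-α) (by linarith) (fun k => X k i0 + α * (if k = a i1 then 1 else 0)) τ hτinj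
      intro k j
      by_cases hj : j = i0
      · subst hj
        simp only [hτdef, if_pos rfl]
        ring
      · have hthis := congrFun (hcol j hj) k
        simp only [Pi.smul_apply, Pi.sub_apply, Pi.single_apply, smul_eq_mul] at hthis
        rw [haj j hj] at hthis
        simp only [hτdef, if_neg hj]
        linarith [hthis]
    · -- case B : all `b` equal
      have hbj : ∀ j, j ≠ i0 → b j = b i1 := fun j hj => hB j hj i1 h01
      have hane : ∀ j, j ≠ i0 → a j ≠ b i1 := by
        intro j hj h
        exact hne j hj (by rw [hbj j hj, ← h])
      have hainj : ∀ i j, i ≠ i0 → j ≠ i0 → i ≠ j → a i ≠ a j := by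
        intro i j hi hj hij
        rcases pair i j hi hj hij with ⟨_, h2⟩ | ⟨_, h2⟩
        · exact absurd ((hbj i hi).trans (hbj j hj).symm) h2
        · exact h2
      set τ : Fin n → Fin n := fun j => if j = i0 then b i1 else a j with hτdef
      have hτinj : Function.Injective τ := by
        intro p q hpq
        by_cases hp : p = i0 <;> by_cases hq : q = i0
        · rw [hp, hq]
        · simp only [hτdef, if_pos hp, if_neg hq] at hpq
          exact absurd hpq.symm (hane q hq)
        · simp only [hτdef, if_neg hp, if_pos hq] at hpq
          exact absurd hpq (hane p hp)
        · by_contra hne'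
          simp only [hτdef, if_neg hp, if_neg hq] at hpq
          exact hainj p q hp hq hne' hpq
      apply build_result X α (by linarith) (fun k => X k i0 - α * (if k = b i1 then 1 else 0)) τ hτinj
      intro k j
      by_cases hj : j = i0
      · subst hj
        simp only [hτdef, if_pos rfl]
        ring
      · have hthis := congrFun (hcol j hj) k
        simp only [Pi.smul_apply, Pi.sub_apply, Pi.single_apply, smul_eq_mul] at hthis
        rw [hbj j hj] at hthis
        simp only [hτdef, if_neg hj]
        linarith [hthis]
  · rintro ⟨v, lam, Q, hlam, ⟨σ, rfl⟩, rfl⟩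
    refine ⟨|lam|, abs_pos.mpr hlam, fun i j hij => ?_⟩
    rw [permOf_single_iff hn]
    have entry : ∀ k p, (((Matrix.of fun i _ => v i) + lam • Equiv.Perm.permMatrix ℝ σ :
          Matrix (Fin n) (Fin n) ℝ)) k p
        = v k + lam * (if k = σ.symm p then 1 else 0) := by
      intro k p
      have hiff : (p = σ k) ↔ (k = σ.symm p) := by
        constructor <;> rintro rfl <;> simp
      have hiff2 : (σ k = p) ↔ (k = σ.symm p) := by
        rw [← hiff, eq_comm]
      simp only [Matrix.add_apply, Matrix.of_apply, Matrix.smul_apply,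
        Equiv.Perm.permMatrix, PEquiv.toMatrix_apply, Equiv.toPEquiv_apply,
        Option.mem_some_iff, smul_eq_mul, hiff, hiff2]
    have hsymm : σ.symm i ≠ σ.symm j := fun h => hij (σ.symm.injective h)
    rcases lt_or_gt_of_ne hlam with hneg | hpos
    · refine ⟨σ.symm j, σ.symm i, hsymm.symm, ?_⟩
      funext k
      simp only [entry, Pi.smul_apply, Pi.sub_apply, Pi.single_apply, smul_eq_mul,
        abs_of_neg hneg]
      ring
    · refine ⟨σ.symm i, σ.symm j, hsymm, ?_⟩
      funext k
      simp only [entry, Pi.smul_apply, Pi.sub_apply, Pi.single_apply, smul_eq_mul,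
        abs_of_pos hpos]
      ring
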